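/- A finite direct sum of essentially compressible modules is essentially compressible. -/

import Mathlib

open DirectSum

/-- A submodule `L` of `M` is *essential* if it meets every nonzero submodule
nontrivially. -/
def EssentialSubmodule {R : Type*} [Ring R] {M : Type*} [AddCommGroup M] [Module R M]
    (L : Submodule R M) : Prop :=
  ∀ N : Submodule R M, N ≠ ⊥ → L ⊓ N ≠ ⊥

/-- A module `M` is *essentially compressible* if every essential submodule of `M`
contains a submodule isomorphic to `M`. -/
def EssentiallyCompressible (R : Type*) [Ring R] (M : Type*) [AddCommGroup M]
    [Module R M] : Prop :=
  ∀ L : Submodule R M, EssentialSubmodule L →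
    ∃ K : Submodule R M, K ≤ L ∧ Nonempty (K ≃ₗ[R] M)

/-- A finite direct sum of essentially compressible modules is essentially
compressible. -/
theorem essentiallyCompressible_directSum (R : Type*) [Ring R] (ι : Type*) [Fintype ι]
    (M : ι → Type*) [∀ i, AddCommGroup (M i)] [∀ i, Module R (M i)]
    (h : ∀ i, EssentiallyCompressible R (M i)) :
    EssentiallyCompressible R (⨁ i, M i) := by
  classical
  intro L hL
  -- The pullback of `L` along each inclusion is essential.
  have hess : ∀ i, EssentialSubmodule (Submodule.comap (DirectSum.lof R ι M i) L) := by
    intro i N hN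
    have hinj : Function.Injective (DirectSum.lof R ι M i) := by
      intro a b hab
      have := congrArg (fun x => DirectSum.component R ι M i x) hab
      simpa using this
    have hmap : Submodule.map (DirectSum.lof R ι M i) N ≠ ⊥ := by
      intro hbot
      apply hN
      exact Submodule.map_injective_of_injective hinj (by simpa using hbot)
    have hLN := hL _ hmap
    rw [Submodule.ne_bot_iff] at hLN ⊢
    obtain ⟨x, ⟨hxL, ⟨n, hnN, rfl⟩⟩, hx0⟩ := hLN
    refine ⟨n, ⟨hxL, hnN⟩, ?_⟩
    intro hn0
    exact hx0 (by rw [hn0]; simp)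
  choose K hKle hKiso using fun i => h i _ (hess i)
  have f : ∀ i, (K i) ≃ₗ[R] M i := fun i => (hKiso i).some
  -- The map from `⨁ K i` into `⨁ M i`.
  set Φ : (⨁ i, K i) →ₗ[R] ⨁ i, M i :=
    DFinsupp.mapRange.linearMap (fun i => (K i).subtype) with hΦ
  have hΦinj : Function.Injective Φ := by
    intro x y hxy
    refine DFunLike.ext _ _ fun j => ?_
    have := DFunLike.congr_fun hxy j
    rw [hΦ] at this
    exact Subtype.ext this
  have hrange : LinearMap.range Φ ≤ L := by
    rintro _ ⟨x, rfl⟩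
    induction x using DirectSum.induction_on with
    | zero => simp only [map_zero]; exact L.zero_mem
    | of j k =>
        have hk : (DirectSum.lof R ι M j) (k : M j) ∈ L := hKle j k.2
        have : Φ (DirectSum.of (fun i => K i) j k) = DirectSum.of M j (k : M j) := by
          show (DFinsupp.mapRange.linearMap fun i => (K i).subtype)
              (DFinsupp.single j k) = DFinsupp.single j (k : M j)
          simp only [DFinsupp.mapRange.linearMap_apply, DFinsupp.mapRange_single]
          rfl
        rw [this]
        exact hk
    | add a b ha hb => rw [map_add]; exact L.add_mem ha hb
  refine ⟨LinearMap.range Φ, hrange, ⟨?_⟩⟩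
  exact (LinearEquiv.ofInjective Φ hΦinj).symm.trans
    (DFinsupp.mapRange.linearEquiv f)
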